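/- Let (Y_k)_{k≥1} be a sequence of integrable real-valued random variables that is uniformly bounded below. If Σ_{k=1}^∞ E[(E[Y_{k+1} − Y_k | Y_1,…,Y_k])⁺] < ∞, where x⁺ = max(x, 0), then Y_k converges almost surely to a (finite) random variable. -/

import Mathlib

open MeasureTheory Filter

/-- Almost-supermartingale convergence (Blum): if `(Y k)` are integrable random
variables, uniformly bounded below, and the sum over `k` of the expectations of the
positive parts of the conditional expectations `E[Y_{k+1} - Y_k | Y_1, …, Y_k]` is
finite, then `Y k` converges almost surely to a finite random variable. -/
theorem stmt15 {Ω : Type*} [MeasurableSpace Ω] (μ : Measure Ω) [IsProbabilityMeasure μ]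
    (Y : ℕ → Ω → ℝ) (hmeas : ∀ k, Measurable (Y k))
    (hint : ∀ k, Integrable (Y k) μ)
    (c : ℝ) (hbdd : ∀ k ω, c ≤ Y k ω)
    (hsum : Summable (fun k : ℕ =>
      ∫ ω, max ((μ[Y (k + 1) - Y k |
        ⨆ i ∈ Finset.range (k + 1), MeasurableSpace.comap (Y i) inferInstance]) ω) 0 ∂μ)) :
    ∀ᵐ ω ∂μ, ∃ L : ℝ, Tendsto (fun k => Y k ω) atTop (nhds L) := by
  set F : ℕ → MeasurableSpace Ω :=
    fun k => ⨆ i ∈ Finset.range (k + 1), MeasurableSpace.comap (Y i) inferInstance with hFdef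
  have hF_le : ∀ k, F k ≤ ‹MeasurableSpace Ω› := by
    intro k
    exact iSup₂_le fun i _ => measurable_iff_comap_le.1 (hmeas i)
  have hF_mono : Monotone F := by
    intro a b hab
    refine iSup₂_le fun i hi => le_iSup₂_of_le i ?_ le_rfl
    exact Finset.mem_range.2 (lt_of_lt_of_le (Finset.mem_range.1 hi) (by omega))
  set ℱ : Filtration ℕ ‹MeasurableSpace Ω› := ⟨F, hF_mono, hF_le⟩ with hFilt
  set D : ℕ → Ω → ℝ := fun k => μ[Y (k + 1) - Y k | F k] with hDdef
  set G : ℕ → Ω → ℝ := fun k ω => max (D k ω) 0 with hGdef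
  set A : ℕ → Ω → ℝ := fun n ω => ∑ i ∈ Finset.range n, G i ω with hAdef
  set X : ℕ → Ω → ℝ := fun n ω => Y n ω - A n ω with hXdef
  have hsum' : Summable (fun k : ℕ => ∫ ω, G k ω ∂μ) := hsum
  have hD_int : ∀ k, Integrable (D k) μ := fun k => integrable_condExp
  have hD_sm : ∀ k, StronglyMeasurable[F k] (D k) := fun k => stronglyMeasurable_condExp
  have hG_int : ∀ k, Integrable (G k) μ := fun k => (hD_int k).pos_part
  have hG_sm : ∀ k, StronglyMeasurable[F k] (G k) := fun k =>
    ((hD_sm k).measurable.max measurable_const).stronglyMeasurable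
  have hG_nonneg : ∀ k ω, 0 ≤ G k ω := fun k ω => le_max_right _ _
  have hA_int : ∀ n, Integrable (A n) μ := by
    intro n
    exact integrable_finset_sum _ fun i _ => hG_int i
  have hA_sm : ∀ n m, n ≤ m + 1 → StronglyMeasurable[F m] (A n) := by
    intro n m hnm
    refine Finset.stronglyMeasurable_fun_sum _ fun i hi => ?_
    exact (hG_sm i).mono (hF_mono (by have := Finset.mem_range.1 hi; omega))
  have hY_sm : ∀ k, StronglyMeasurable[F k] (Y k) := by
    intro k
    refine Measurable.stronglyMeasurable ?_
    exact measurable_iff_comap_le.2 (le_iSup₂_of_le k (Finset.mem_range.2 (by omega)) le_rfl)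
  have hX_int : ∀ n, Integrable (X n) μ := fun n => (hint n).sub (hA_int n)
  have hX_adp : StronglyAdapted ℱ X := by
    intro n
    exact ((hY_sm n).sub (hA_sm n n (by omega)))
  -- supermartingale step
  have key : ∀ n, μ[X (n + 1) | F n] ≤ᵐ[μ] X n := by
    intro n
    have h1 : μ[X (n + 1) | F n] =ᵐ[μ] μ[Y (n + 1) | F n] - μ[A (n + 1) | F n] :=
      condExp_sub (hint _) (hA_int _) (F n)
    have h2 : μ[A (n + 1) | F n] = A (n + 1) :=
      condExp_of_stronglyMeasurable (hF_le n) (hA_sm (n + 1) n le_rfl) (hA_int _)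
    have h3 : μ[Y (n + 1) | F n] =ᵐ[μ] D n + Y n := by
      have hY : Y (n + 1) = (Y (n + 1) - Y n) + Y n := by ext ω; simp
      calc μ[Y (n + 1) | F n] = μ[(Y (n + 1) - Y n) + Y n | F n] := by rw [← hY]
        _ =ᵐ[μ] μ[Y (n + 1) - Y n | F n] + μ[Y n | F n] :=
            condExp_add ((hint _).sub (hint _)) (hint _) (F n)
        _ = D n + μ[Y n | F n] := rfl
        _ = D n + Y n := by
            rw [condExp_of_stronglyMeasurable (hF_le n) (hY_sm n) (hint n)]
    filter_upwards [h1, h3] with ω h1ω h3ω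
    have hA1 : A (n + 1) ω = A n ω + G n ω := Finset.sum_range_succ _ _
    have heq : (μ[X (n + 1) | F n]) ω = (μ[Y (n + 1) | F n]) ω - (μ[A (n + 1) | F n]) ω := h1ω
    rw [heq, h2, h3ω]
    simp only [Pi.add_apply]
    rw [hA1]
    have hle : D n ω ≤ G n ω := le_max_left _ _
    show D n ω + Y n ω - (A n ω + G n ω) ≤ Y n ω - A n ω
    linarith
  have hsup : Supermartingale X ℱ μ := supermartingale_nat hX_adp hX_int key
  -- L¹ bound
  set S : ℝ := ∑' k, ∫ ω, G k ω ∂μ with hSdef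
  have hGint_nonneg : ∀ k, 0 ≤ ∫ ω, G k ω ∂μ := fun k =>
    integral_nonneg fun ω => hG_nonneg k ω
  have hpartial : ∀ n, ∑ i ∈ Finset.range n, ∫ ω, G i ω ∂μ ≤ S := fun n =>
    hsum'.sum_le_tsum _ (fun i _ => hGint_nonneg i)
  have hEY : ∀ n, ∫ ω, Y n ω ∂μ ≤ ∫ ω, Y 0 ω ∂μ + S := by
    intro n
    have htel : ∫ ω, Y n ω ∂μ - ∫ ω, Y 0 ω ∂μ
        = ∑ i ∈ Finset.range n, (∫ ω, Y (i + 1) ω ∂μ - ∫ ω, Y i ω ∂μ) := by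
      rw [Finset.sum_range_sub (fun i => ∫ ω, Y i ω ∂μ)]
    have hDi : ∀ i, ∫ ω, Y (i + 1) ω ∂μ - ∫ ω, Y i ω ∂μ ≤ ∫ ω, G i ω ∂μ := by
      intro i
      have h1 : ∫ ω, D i ω ∂μ = ∫ ω, (Y (i + 1) - Y i) ω ∂μ :=
        integral_condExp (hF_le i)
      have h2 : ∫ ω, (Y (i + 1) - Y i) ω ∂μ = ∫ ω, Y (i + 1) ω ∂μ - ∫ ω, Y i ω ∂μ := by
        simp only [Pi.sub_apply]
        exact integral_sub (hint _) (hint _)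
      have h3 : ∫ ω, D i ω ∂μ ≤ ∫ ω, G i ω ∂μ :=
        integral_mono (hD_int i) (hG_int i) fun ω => le_max_left _ _
      linarith
    have : ∫ ω, Y n ω ∂μ - ∫ ω, Y 0 ω ∂μ ≤ ∑ i ∈ Finset.range n, ∫ ω, G i ω ∂μ := by
      rw [htel]; exact Finset.sum_le_sum fun i _ => hDi i
    linarith [hpartial n]
  have habsY : ∀ n, ∫ ω, |Y n ω| ∂μ ≤ ∫ ω, Y 0 ω ∂μ + S - c + |c| := by
    intro n
    have hpt : ∀ ω, |Y n ω| ≤ Y n ω - c + |c| := by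
      intro ω
      rcases le_or_gt 0 (Y n ω) with h | h
      · rw [abs_of_nonneg h]; linarith [le_abs_self c]
      · rw [abs_of_neg h]
        have hc : c < 0 := lt_of_le_of_lt (hbdd n ω) h
        rw [abs_of_neg hc]
        linarith [hbdd n ω]
    have hf : Integrable (fun ω => Y n ω - c) μ := (hint n).sub (integrable_const c)
    have hib : Integrable (fun ω => Y n ω - c + |c|) μ := hf.add (integrable_const |c|)
    have habs : Integrable (fun ω => |Y n ω|) μ := (hint n).abs
    calc ∫ ω, |Y n ω| ∂μ ≤ ∫ ω, (Y n ω - c + |c|) ∂μ :=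
          integral_mono habs hib hpt
      _ = ∫ ω, Y n ω ∂μ - c + |c| := by
          rw [integral_add hf (integrable_const _),
            integral_sub (hint n) (integrable_const c)]
          simp [measure_univ]
      _ ≤ ∫ ω, Y 0 ω ∂μ + S - c + |c| := by linarith [hEY n]
  have hAn : ∀ n, ∫ ω, A n ω ∂μ ≤ S := by
    intro n
    have : ∫ ω, A n ω ∂μ = ∑ i ∈ Finset.range n, ∫ ω, G i ω ∂μ :=
      integral_finset_sum _ fun i _ => hG_int i
    rw [this]
    exact hpartial n
  set B : ℝ := ∫ ω, Y 0 ω ∂μ + S - c + |c| + S with hBdef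
  have hXbd : ∀ n, ∫ ω, |X n ω| ∂μ ≤ B := by
    intro n
    have hpt : ∀ ω, |X n ω| ≤ |Y n ω| + A n ω := by
      intro ω
      have hApos : 0 ≤ A n ω := Finset.sum_nonneg fun i _ => hG_nonneg i ω
      calc |X n ω| = |Y n ω - A n ω| := rfl
        _ ≤ |Y n ω| + |A n ω| := abs_sub _ _
        _ = |Y n ω| + A n ω := by rw [abs_of_nonneg hApos]
    have habs : Integrable (fun ω => |Y n ω|) μ := (hint n).abs
    have habsX : Integrable (fun ω => |X n ω|) μ := (hX_int n).abs
    calc ∫ ω, |X n ω| ∂μ ≤ ∫ ω, (|Y n ω| + A n ω) ∂μ :=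
          integral_mono habsX (habs.add (hA_int n)) hpt
      _ = ∫ ω, |Y n ω| ∂μ + ∫ ω, A n ω ∂μ := integral_add habs (hA_int n)
      _ ≤ B := by have := habsY n; have := hAn n; rw [hBdef]; linarith
  have heLp : ∀ n, eLpNorm (X n) 1 μ ≤ B.toNNReal := by
    intro n
    have h1 : eLpNorm (X n) 1 μ = ENNReal.ofReal (∫ ω, ‖X n ω‖ ∂μ) := by
      rw [eLpNorm_one_eq_lintegral_enorm, ← ofReal_integral_norm_eq_lintegral_enorm (hX_int n)]
    rw [h1]
    have hB : ∫ ω, ‖X n ω‖ ∂μ ≤ B := by simpa [Real.norm_eq_abs] using hXbd n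
    calc ENNReal.ofReal (∫ ω, ‖X n ω‖ ∂μ) ≤ ENNReal.ofReal B := ENNReal.ofReal_le_ofReal hB
      _ = (B.toNNReal : ENNReal) := rfl
  -- X converges a.e.
  have hXconv : ∀ᵐ ω ∂μ, ∃ L : ℝ, Tendsto (fun n => X n ω) atTop (nhds L) := by
    have hsub : Submartingale (-X) ℱ μ := hsup.neg
    have hbd : ∀ n, eLpNorm ((-X) n) 1 μ ≤ B.toNNReal := by
      intro n
      have : eLpNorm (-(X n)) 1 μ ≤ B.toNNReal := by rw [eLpNorm_neg]; exact heLp n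
      simpa using this
    filter_upwards [hsub.exists_ae_tendsto_of_bdd hbd] with ω hω
    obtain ⟨L, hL⟩ := hω
    refine ⟨-L, ?_⟩
    have : (fun n => X n ω) = fun n => -((-X) n ω) := by funext n; simp
    rw [this]
    exact hL.neg
  -- A converges a.e.
  have hAconv : ∀ᵐ ω ∂μ, ∃ L : ℝ, Tendsto (fun n => A n ω) atTop (nhds L) := by
    have hGmeas : ∀ k, Measurable (fun ω => ENNReal.ofReal (G k ω)) := fun k =>
      (((hG_sm k).mono (hF_le k)).measurable).ennreal_ofReal
    have hfin : ∫⁻ ω, ∑' k, ENNReal.ofReal (G k ω) ∂μ < ⊤ := by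
      rw [lintegral_tsum fun k => (hGmeas k).aemeasurable]
      have heq : ∀ k, ∫⁻ ω, ENNReal.ofReal (G k ω) ∂μ = ENNReal.ofReal (∫ ω, G k ω ∂μ) :=
        fun k => (ofReal_integral_eq_lintegral_ofReal (hG_int k)
          (Filter.Eventually.of_forall fun ω => hG_nonneg k ω)).symm
      simp_rw [heq]
      rw [← ENNReal.ofReal_tsum_of_nonneg hGint_nonneg hsum']
      exact ENNReal.ofReal_lt_top
    have hae : ∀ᵐ ω ∂μ, ∑' k, ENNReal.ofReal (G k ω) < ⊤ :=
      ae_lt_top (Measurable.ennreal_tsum hGmeas) hfin.ne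
    filter_upwards [hae] with ω hω
    have hsummable : Summable (fun k => G k ω) := by
      have h := ENNReal.summable_toReal hω.ne
      convert h using 2 with k
      rw [ENNReal.toReal_ofReal (hG_nonneg k ω)]
    exact ⟨∑' k, G k ω, hsummable.hasSum.tendsto_sum_nat⟩
  filter_upwards [hXconv, hAconv] with ω hX hA
  obtain ⟨LX, hLX⟩ := hX
  obtain ⟨LA, hLA⟩ := hA
  refine ⟨LX + LA, ?_⟩
  have hYeq : (fun n => Y n ω) = fun n => X n ω + A n ω := by
    funext n
    show Y n ω = Y n ω - A n ω + A n ω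
    ring
  rw [hYeq]
  exact hLX.add hLA
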